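/- For every natural number n and all real numbers x, s, one has ∑_{j=0}^{n} (-s)^j · (Nat.choose (2n) j) · L (2n - 2j) x s = x^(2n) + (-s)^n · Nat.choose (2n) n. -/

import Mathlib

/-- Bivariate Lucas polynomials. -/
def L : ℕ → ℝ → ℝ → ℝ
  | 0, _, _ => 2
  | 1, x, _ => x
  | n + 2, x, s => x * L (n + 1) x s + s * L n x s

lemma L_binet (α β : ℂ) (x s : ℝ) (hsum : α + β = x) (hprod : α * β = -s) :
    ∀ m, (L m x s : ℂ) = α ^ m + β ^ m := by
  have key : ∀ m, ((L m x s : ℂ) = α ^ m + β ^ m) ∧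
      ((L (m + 1) x s : ℂ) = α ^ (m + 1) + β ^ (m + 1)) := by
    intro m
    induction m with
    | zero => constructor <;> norm_num [L, hsum]
    | succ k ih =>
      refine ⟨ih.2, ?_⟩
      have : L (k + 2) x s = x * L (k + 1) x s + s * L k x s := rfl
      rw [this]
      push_cast
      rw [ih.1, ih.2, ← hsum]
      have hs : (s : ℂ) = -(α * β) := by rw [hprod]; ring
      rw [hs]; ring
  exact fun m => (key m).1

theorem stmt_11 (n : ℕ) (x s : ℝ) :
    ∑ j ∈ Finset.range (n + 1),
        (-s) ^ j * (Nat.choose (2 * n) j : ℝ) * L (2 * n - 2 * j) x s =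
      x ^ (2 * n) + (-s) ^ n * (Nat.choose (2 * n) n : ℝ) := by
  obtain ⟨D, hD⟩ := Complex.isAlgClosed.exists_pow_nat_eq ((x : ℂ) ^ 2 + 4 * s) (n := 2) (by norm_num)
  set α : ℂ := ((x : ℂ) + D) / 2 with hα
  set β : ℂ := ((x : ℂ) - D) / 2 with hβ
  have hsum : α + β = x := by rw [hα, hβ]; ring
  have hprod : α * β = -s := by
    have h1 : α * β = ((x : ℂ) ^ 2 - D ^ 2) / 4 := by rw [hα, hβ]; ring
    rw [h1, hD]; ring
  have binet := L_binet α β x s hsum hprod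
  set f : ℕ → ℂ := fun k => α ^ k * β ^ (2 * n - k) * (Nat.choose (2 * n) k : ℂ) with hf
  have key : (∑ j ∈ Finset.range (n + 1),
      (-(s : ℂ)) ^ j * (Nat.choose (2 * n) j : ℂ) * ((L (2 * n - 2 * j) x s : ℝ) : ℂ))
      = (x : ℂ) ^ (2 * n) + (-(s : ℂ)) ^ n * (Nat.choose (2 * n) n : ℂ) := by
    have step : ∀ j ∈ Finset.range (n + 1),
        (-(s : ℂ)) ^ j * (Nat.choose (2 * n) j : ℂ) * ((L (2 * n - 2 * j) x s : ℝ) : ℂ)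
          = f (2 * n - j) + f j := by
      intro j hj
      rw [Finset.mem_range, Nat.lt_succ_iff] at hj
      rw [binet, ← hprod, hf]
      simp only
      have e1 : j + (2 * n - 2 * j) = 2 * n - j := by omega
      have e2 : 2 * n - (2 * n - j) = j := by omega
      have e3 : Nat.choose (2 * n) (2 * n - j) = Nat.choose (2 * n) j :=
        Nat.choose_symm (by omega)
      rw [e2, e3, mul_pow, ← e1, pow_add, pow_add]
      ring
    rw [Finset.sum_congr rfl step, Finset.sum_add_distrib]
    have refl1 : (∑ j ∈ Finset.range (n + 1), f (2 * n - j))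
        = ∑ j ∈ Finset.range (n + 1), f (n + j) := by
      rw [← Finset.sum_range_reflect]
      apply Finset.sum_congr rfl
      intro j hj
      rw [Finset.mem_range, Nat.lt_succ_iff] at hj
      congr 1
      omega
    have refl2 : (∑ j ∈ Finset.range (n + 1), f (n + j))
        = ∑ i ∈ Finset.Ico n (2 * n + 1), f i := by
      rw [Finset.sum_Ico_eq_sum_range]
      apply Finset.sum_congr
      · congr 1; omega
      · intro j _; congr 1
    have splitr : (∑ i ∈ Finset.range (2 * n + 1), f i)
        = (∑ i ∈ Finset.range n, f i) + ∑ i ∈ Finset.Ico n (2 * n + 1), f i := by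
      rw [Finset.range_eq_Ico, ← Finset.sum_Ico_consecutive _ (Nat.zero_le n) (by omega), Finset.range_eq_Ico]
    have sumsucc : (∑ j ∈ Finset.range (n + 1), f j)
        = (∑ j ∈ Finset.range n, f j) + f n := Finset.sum_range_succ f n
    have total : (∑ i ∈ Finset.range (2 * n + 1), f i) = (x : ℂ) ^ (2 * n) := by
      rw [← hsum, add_pow]
    have fn : f n = (-(s : ℂ)) ^ n * (Nat.choose (2 * n) n : ℂ) := by
      rw [hf]
      simp only
      rw [show 2 * n - n = n from by omega, ← mul_pow, hprod]
    rw [refl1, refl2, sumsucc, ← add_assoc, add_comm (∑ i ∈ Finset.Ico n (2*n+1), f i)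
      (∑ j ∈ Finset.range n, f j), ← splitr, total, fn]
  have := key
  push_cast at this
  exact_mod_cast this
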